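/- Let X̂ be a Hausdorff uniform space and let X be a dense subset of X̂ carrying the induced uniformity. Let f be a relation on X that is closed in X × X, and let f̂ be the closure of f in X̂ × X̂. Then (X × X) ∩ 𝒞f̂ = 𝒞f, where 𝒞f̂ is the chain relation of f̂ with respect to the uniformity of X̂ and 𝒞f is the chain relation of f with respect to the induced uniformity on X. -/

import Mathlib

/-- Composition of relations: `relComp g f = g ∘ f` (first `f`, then `g`). -/
def relComp {X Y Z : Type*} (g : Set (Y × Z)) (f : Set (X × Y)) : Set (X × Z) :=
  {p | ∃ y, (p.1, y) ∈ f ∧ (y, p.2) ∈ g}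

/-- `relIterate F n` is the `n`-fold composition `Fⁿ` (with `F⁰` the diagonal). -/
def relIterate {X : Type*} (F : Set (X × X)) : ℕ → Set (X × X)
  | 0 => {p : X × X | p.1 = p.2}
  | n + 1 => relComp F (relIterate F n)

/-- The orbit relation `𝒪g = ⋃_{n ≥ 1} gⁿ`. -/
def orbitRel {X : Type*} (g : Set (X × X)) : Set (X × X) :=
  ⋃ n ∈ Set.Ici (1 : ℕ), relIterate g n

/-- The chain relation of a relation `f` on a uniform space `X`:
`𝒞f = ⋂_V 𝒪(V ∘ f ∘ V)`, where `V` ranges over the entourages of `X`. -/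
def chainRelU {X : Type*} [UniformSpace X] (f : Set (X × X)) : Set (X × X) :=
  ⋂ V ∈ uniformity X, orbitRel (relComp V (relComp f V))

lemma relIterate_map {X Y : Type*} (m : X → Y) {g : Set (X × X)} {G : Set (Y × Y)}
    (h : ∀ p ∈ g, (m p.1, m p.2) ∈ G) :
    ∀ n, ∀ p ∈ relIterate g n, (m p.1, m p.2) ∈ relIterate G n := by
  intro n
  induction n with
  | zero =>
    intro p hp
    simp only [relIterate, Set.mem_setOf_eq] at hp ⊢
    rw [hp]
  | succ n ih =>
    rintro p ⟨y, hy1, hy2⟩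
    exact ⟨m y, ih (p.1, y) hy1, h (y, p.2) hy2⟩

/-- Let `X̂` be a Hausdorff uniform space, `X ⊆ X̂` dense with the induced
uniformity, `f` a closed relation on `X` and `f̂` the closure of `f` in `X̂ × X̂`.  Then
`(X × X) ∩ 𝒞f̂ = 𝒞f`. -/
theorem chainRel_of_dense_subset
    {Xh : Type*} [UniformSpace Xh] [T2Space Xh]
    (s : Set Xh) (hs : Dense s)
    (f : Set (↥s × ↥s)) (hf : IsClosed f) :
    ∀ x y : ↥s,
      ((x : Xh), (y : Xh)) ∈
          chainRelU (closure (Prod.map (Subtype.val : ↥s → Xh) Subtype.val '' f)) ↔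
        (x, y) ∈ chainRelU f := by
  intro x y
  set fh : Set (Xh × Xh) := closure (Prod.map (Subtype.val : ↥s → Xh) Subtype.val '' f) with hfh
  have hsubf : ∀ a b : ↥s, (a, b) ∈ f → ((a : Xh), (b : Xh)) ∈ fh :=
    fun a b hab => subset_closure ⟨(a, b), hab, rfl⟩
  constructor
  · -- hard direction: chain in X̂ gives chain in X
    intro h
    simp only [chainRelU, Set.mem_iInter] at h ⊢
    intro V hV
    rw [uniformity_subtype] at hV
    obtain ⟨Vh, hVh, hVsub⟩ := hV
    obtain ⟨W1, hW1, hW1symm, hW1c⟩ := comp_symm_mem_uniformity_sets hVh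
    obtain ⟨W, hW, hWsymm, hWc⟩ := comp_symm_mem_uniformity_sets hW1
    have hW1Vh : W1 ⊆ Vh := fun p hp => hW1c ⟨p.2, hp, refl_mem_uniformity hW1⟩
    -- approximation of points of fh by points of f
    have approx : ∀ v u : Xh, (v, u) ∈ fh →
        ∃ a b : ↥s, (a, b) ∈ f ∧ (v, (a : Xh)) ∈ W ∧ (u, (b : Xh)) ∈ W := by
      intro v u hvu
      have hn : (UniformSpace.ball v W ×ˢ UniformSpace.ball u W) ∈ nhds (v, u) :=
        prod_mem_nhds (UniformSpace.ball_mem_nhds v hW) (UniformSpace.ball_mem_nhds u hW)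
      obtain ⟨q, hq1, hq2⟩ := mem_closure_iff_nhds.mp hvu _ hn
      obtain ⟨⟨a, b⟩, habf, heq⟩ := hq2
      subst heq
      exact ⟨a, b, habf, hq1.1, hq1.2⟩
    set Fh : Set (Xh × Xh) := relComp W (relComp fh W) with hFh
    set G : Set (↥s × ↥s) := relComp V (relComp f V) with hG
    have memV : ∀ a b : ↥s, ((a : Xh), (b : Xh)) ∈ Vh → (a, b) ∈ V := by
      intro a b hab
      exact hVsub hab
    have key : ∀ k (zh : Xh), (((x : Xh), zh) ∈ relIterate Fh (k + 1)) →
        ∀ y' : ↥s, (zh, (y' : Xh)) ∈ W1 → (x, y') ∈ relIterate G (k + 1) := by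
      intro k
      induction k with
      | zero =>
        rintro zh ⟨m, hm0, hmF⟩ y' hzy
        simp only [relIterate, Set.mem_setOf_eq] at hm0
        obtain ⟨u, ⟨v, hv, hvu⟩, huz⟩ := hmF
        obtain ⟨a, b, hab, hva, hub⟩ := approx v u hvu
        have hxa : (x, a) ∈ V := by
          subst hm0
          exact memV _ _ (hW1Vh (hWc ⟨v, hv, hva⟩))
        have hby : (b, y') ∈ V := by
          apply memV
          have h1 : ((b : Xh), zh) ∈ W1 := hWc ⟨u, hWsymm.symm _ _ hub, huz⟩
          exact hW1c ⟨zh, h1, hzy⟩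
        exact ⟨x, rfl, b, ⟨a, hxa, hab⟩, hby⟩
      | succ k ih =>
        rintro zh ⟨m, hm, hmF⟩ y' hzy
        obtain ⟨u, ⟨v, hv, hvu⟩, huz⟩ := hmF
        obtain ⟨a, b, hab, hva, hub⟩ := approx v u hvu
        have hma : (x, a) ∈ relIterate G (k + 1) := ih m hm a (hWc ⟨v, hv, hva⟩)
        have hby : (b, y') ∈ V := by
          apply memV
          have h1 : ((b : Xh), zh) ∈ W1 := hWc ⟨u, hWsymm.symm _ _ hub, huz⟩
          exact hW1c ⟨zh, h1, hzy⟩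
        have haa : (a, a) ∈ V := memV a a (refl_mem_uniformity hVh)
        exact ⟨a, hma, b, ⟨a, haa, hab⟩, hby⟩
    have hW' := h W hW
    simp only [orbitRel, Set.mem_iUnion, Set.mem_Ici, exists_prop] at hW' ⊢
    obtain ⟨n, hn1, hch⟩ := hW'
    obtain ⟨k, rfl⟩ : ∃ k, n = k + 1 := ⟨n - 1, by omega⟩
    exact ⟨k + 1, by omega, key k (y : Xh) hch y (refl_mem_uniformity hW1)⟩
  · -- easy direction: map a chain in X to X̂
    intro h
    simp only [chainRelU, Set.mem_iInter] at h ⊢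
    intro Vh hVh
    have hV : ((fun q : ↥s × ↥s => ((q.1 : Xh), (q.2 : Xh))) ⁻¹' Vh) ∈ uniformity ↥s := by
      rw [uniformity_subtype]
      exact Filter.preimage_mem_comap hVh
    have h' := h _ hV
    simp only [orbitRel, Set.mem_iUnion, Set.mem_Ici, exists_prop] at h' ⊢
    obtain ⟨n, hn1, hch⟩ := h'
    refine ⟨n, hn1, ?_⟩
    have hstep : ∀ p ∈ relComp ((fun q : ↥s × ↥s => ((q.1 : Xh), (q.2 : Xh))) ⁻¹' Vh)
        (relComp f ((fun q : ↥s × ↥s => ((q.1 : Xh), (q.2 : Xh))) ⁻¹' Vh)),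
        (((p.1 : ↥s) : Xh), ((p.2 : ↥s) : Xh)) ∈ relComp Vh (relComp fh Vh) := by
      rintro p ⟨b, ⟨a, hpa, hab⟩, hbp⟩
      exact ⟨(b : Xh), ⟨(a : Xh), hpa, hsubf a b hab⟩, hbp⟩
    exact relIterate_map (fun z : ↥s => (z : Xh)) hstep n (x, y) hch
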